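/- Let (X,d) be a compact metric space and let (X, f_{1,∞}) be a non-autonomous discrete system such that f_{1,∞} is feeble open, each f_n is surjective, (f_n) converges uniformly to a continuous map f : X → X, and the compositions (f_r^k) converge collectively to (f^k). Then f_{1,∞} is totally transitive if and only if f is totally transitive. -/
import Mathlib


open Set Filter

/-- `nds f i n` is the `n`-step composition `f_i^n = f (i+n-1) ∘ ⋯ ∘ f i`, with `nds f i 0 = id`. -/
def nds {X : Type*} (f : ℕ → X → X) (i : ℕ) : ℕ → X → X
  | 0 => id
  | n + 1 => f (i + n) ∘ nds f i n

section TopDefs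

variable {X : Type*} [TopologicalSpace X]

/-- The NDS `f_{1,∞}` is (topologically) transitive. -/
def NDSTransitive (f : ℕ → X → X) : Prop :=
  ∀ U V : Set X, IsOpen U → U.Nonempty → IsOpen V → V.Nonempty →
    ∃ n : ℕ, 0 < n ∧ (nds f 1 n '' U ∩ V).Nonempty

/-- The NDS `f_{1,∞}` is mixing. -/
def NDSMixing (f : ℕ → X → X) : Prop :=
  ∀ U V : Set X, IsOpen U → U.Nonempty → IsOpen V → V.Nonempty →
    ∃ N : ℕ, ∀ n : ℕ, N ≤ n → (nds f 1 n '' U ∩ V).Nonempty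

/-- The NDS `f_{1,∞}` is weakly mixing. -/
def NDSWeaklyMixing (f : ℕ → X → X) : Prop :=
  ∀ U₁ U₂ V₁ V₂ : Set X, IsOpen U₁ → U₁.Nonempty → IsOpen U₂ → U₂.Nonempty →
    IsOpen V₁ → V₁.Nonempty → IsOpen V₂ → V₂.Nonempty →
    ∃ n : ℕ, 0 < n ∧ (nds f 1 n '' U₁ ∩ V₁).Nonempty ∧ (nds f 1 n '' U₂ ∩ V₂).Nonempty

/-- The NDS `f_{1,∞}` is multi-transitive. -/
def NDSMultiTransitive (f : ℕ → X → X) : Prop :=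
  ∀ m : ℕ, 0 < m → ∀ U V : Fin m → Set X,
    (∀ j, IsOpen (U j)) → (∀ j, (U j).Nonempty) →
    (∀ j, IsOpen (V j)) → (∀ j, (V j).Nonempty) →
    ∃ l : ℕ, 0 < l ∧ ∀ j : Fin m, (nds f 1 (l * (j.1 + 1)) '' U j ∩ V j).Nonempty

/-- The NDS `f_{1,∞}` is totally transitive. -/
def NDSTotallyTransitive (f : ℕ → X → X) : Prop :=
  ∀ k : ℕ, 0 < k → ∀ U V : Set X, IsOpen U → U.Nonempty → IsOpen V → V.Nonempty →
    ∃ n : ℕ, 0 < n ∧ (nds f 1 (n * k) '' U ∩ V).Nonempty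

/-- The NDS `f_{1,∞}` is minimal: every orbit is dense. -/
def NDSMinimal (f : ℕ → X → X) : Prop :=
  ∀ x : X, Dense (Set.range fun n : ℕ => nds f 1 n x)

/-- The NDS `f_{1,∞}` is feeble open. -/
def FeebleOpen (f : ℕ → X → X) : Prop :=
  ∀ i : ℕ, 1 ≤ i → ∀ U : Set X, IsOpen U → U.Nonempty → (interior (f i '' U)).Nonempty

/-- A set of positive integers is syndetic (has bounded gaps). -/
def SyndeticSet (A : Set ℕ) : Prop :=
  ∃ M : ℕ, ∀ i : ℕ, 1 ≤ i → ∃ j ∈ A, i ≤ j ∧ j ≤ i + M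

/-- A set of positive integers is thick (contains arbitrarily long runs). -/
def ThickSet (A : Set ℕ) : Prop :=
  ∀ p : ℕ, ∃ n : ℕ, ∀ j : ℕ, n ≤ j → j ≤ n + p → j ∈ A

/-- The NDS `f_{1,∞}` is syndetically transitive. -/
def NDSSyndeticallyTransitive (f : ℕ → X → X) : Prop :=
  ∀ U V : Set X, IsOpen U → U.Nonempty → IsOpen V → V.Nonempty →
    SyndeticSet {n : ℕ | 0 < n ∧ (nds f 1 n '' U ∩ V).Nonempty}

/-- The NDS `f_{1,∞}` has dense periodic points. -/
def NDSDensePeriodicPoints (f : ℕ → X → X) : Prop :=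
  Dense {x : X | ∃ k : ℕ, 0 < k ∧ ∀ n : ℕ, 0 < n → nds f 1 (k * n) x = x}

/-- The NDS `f_{k,∞}` is strongly transitive. -/
def NDSStronglyTransitiveFrom (f : ℕ → X → X) (k : ℕ) : Prop :=
  ∀ U : Set X, IsOpen U → U.Nonempty →
    ∃ M : ℕ, 0 < M ∧ (⋃ i ∈ Set.Icc 1 M, nds f k i '' U) = Set.univ

/-- An autonomous map is transitive. -/
def MapTransitive {Y : Type*} [TopologicalSpace Y] (g : Y → Y) : Prop :=
  ∀ U V : Set Y, IsOpen U → U.Nonempty → IsOpen V → V.Nonempty →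
    ∃ n : ℕ, 0 < n ∧ (g^[n] '' U ∩ V).Nonempty

/-- An autonomous map is weakly mixing. -/
def MapWeaklyMixing {Y : Type*} [TopologicalSpace Y] (g : Y → Y) : Prop :=
  ∀ U₁ U₂ V₁ V₂ : Set Y, IsOpen U₁ → U₁.Nonempty → IsOpen U₂ → U₂.Nonempty →
    IsOpen V₁ → V₁.Nonempty → IsOpen V₂ → V₂.Nonempty →
    ∃ n : ℕ, 0 < n ∧ (g^[n] '' U₁ ∩ V₁).Nonempty ∧ (g^[n] '' U₂ ∩ V₂).Nonempty

/-- An autonomous map is totally transitive. -/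
def MapTotallyTransitive {Y : Type*} [TopologicalSpace Y] (g : Y → Y) : Prop :=
  ∀ k : ℕ, 0 < k → ∀ U V : Set Y, IsOpen U → U.Nonempty → IsOpen V → V.Nonempty →
    ∃ n : ℕ, 0 < n ∧ (g^[n * k] '' U ∩ V).Nonempty

/-- An autonomous map is syndetically transitive. -/
def MapSyndeticallyTransitive {Y : Type*} [TopologicalSpace Y] (g : Y → Y) : Prop :=
  ∀ U V : Set Y, IsOpen U → U.Nonempty → IsOpen V → V.Nonempty →
    SyndeticSet {n : ℕ | 0 < n ∧ (g^[n] '' U ∩ V).Nonempty}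

/-- An autonomous map is minimal. -/
def MapMinimal {Y : Type*} [TopologicalSpace Y] (g : Y → Y) : Prop :=
  ∀ x : Y, Dense (Set.range fun n : ℕ => g^[n] x)

end TopDefs

section MetricDefs

variable {X : Type*} [MetricSpace X]

/-- The compositions `(f_r^k)` converge collectively to `(f^k)` (w.r.t. the supremum metric). -/
def CollectivelyConverges (f : ℕ → X → X) (g : X → X) : Prop :=
  ∀ ε : ℝ, 0 < ε → ∃ r₀ : ℕ, ∀ r : ℕ, r₀ ≤ r → ∀ k : ℕ, 1 ≤ k → ∀ x : X,
    dist (nds f r k x) (g^[k] x) < ε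

/-- `N(U, δ)`: the times at which the NDS is `δ`-sensitive on `U`. -/
def SensSet (f : ℕ → X → X) (U : Set X) (δ : ℝ) : Set ℕ :=
  {n : ℕ | 0 < n ∧ ∃ x ∈ U, ∃ y ∈ U, δ < dist (nds f 1 n x) (nds f 1 n y)}

/-- The NDS `f_{1,∞}` is multi-sensitive. -/
def NDSMultiSensitive (f : ℕ → X → X) : Prop :=
  ∃ δ : ℝ, 0 < δ ∧ ∀ m : ℕ, 0 < m → ∀ U : Fin m → Set X,
    (∀ i, IsOpen (U i)) → (∀ i, (U i).Nonempty) → (⋂ i, SensSet f (U i) δ).Nonempty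

/-- The NDS `f_{1,∞}` is thickly sensitive. -/
def NDSThicklySensitive (f : ℕ → X → X) : Prop :=
  ∃ δ : ℝ, 0 < δ ∧ ∀ U : Set X, IsOpen U → U.Nonempty → ThickSet (SensSet f U δ)

/-- The NDS `f_{1,∞}` is syndetically sensitive. -/
def NDSSyndeticallySensitive (f : ℕ → X → X) : Prop :=
  ∃ δ : ℝ, 0 < δ ∧ ∀ U : Set X, IsOpen U → U.Nonempty → SyndeticSet (SensSet f U δ)

/-- The NDS `f_{1,∞}` is mildly mixing: its product with every transitive NDS on a compact
metric space is transitive. -/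
def NDSMildlyMixing (f : ℕ → X → X) : Prop :=
  ∀ (Y : Type*) [MetricSpace Y] [CompactSpace Y] (g : ℕ → Y → Y),
    (∀ n : ℕ, 1 ≤ n → Continuous (g n)) → NDSTransitive g →
    NDSTransitive (fun n (p : X × Y) => (f n p.1, g n p.2))

/-- The NDS `f_{1,∞}` is Li–Yorke chaotic. -/
def LiYorkeChaotic (f : ℕ → X → X) : Prop :=
  ∃ S : Set X, ¬S.Countable ∧ ∀ x ∈ S, ∀ y ∈ S, x ≠ y →
    Filter.liminf (fun n : ℕ => dist (nds f 1 n x) (nds f 1 n y)) Filter.atTop = 0 ∧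
    0 < Filter.limsup (fun n : ℕ => dist (nds f 1 n x) (nds f 1 n y)) Filter.atTop

end MetricDefs

lemma nds_add {X : Type*} (f : ℕ → X → X) (i a b : ℕ) :
    nds f i (a + b) = nds f (i + a) b ∘ nds f i a := by
  induction b with
  | zero => rfl
  | succ b ih =>
    have h : a + (b + 1) = (a + b) + 1 := by omega
    rw [h]
    show f (i + (a + b)) ∘ nds f i (a + b) = (f (i + a + b) ∘ nds f (i + a) b) ∘ nds f i a
    rw [ih, Nat.add_assoc]
    rfl

lemma nds_cont {X : Type*} [TopologicalSpace X] (f : ℕ → X → X)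
    (hcont : ∀ n : ℕ, 1 ≤ n → Continuous (f n)) (i : ℕ) (hi : 1 ≤ i) :
    ∀ n, Continuous (nds f i n)
  | 0 => continuous_id
  | n + 1 => ((hcont (i + n) (by omega)).comp (nds_cont f hcont i hi n))

lemma nds_surj {X : Type*} (f : ℕ → X → X)
    (hsurj : ∀ n : ℕ, 1 ≤ n → Function.Surjective (f n)) (i : ℕ) (hi : 1 ≤ i) :
    ∀ n, Function.Surjective (nds f i n)
  | 0 => Function.surjective_id
  | n + 1 => ((hsurj (i + n) (by omega)).comp (nds_surj f hsurj i hi n))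

lemma feeble_chain {X : Type*} [TopologicalSpace X] (f : ℕ → X → X)
    (hfo : FeebleOpen f) (U : Set X) (hU : IsOpen U) (hUne : U.Nonempty) :
    ∀ m : ℕ, ∃ W : Set X, IsOpen W ∧ W.Nonempty ∧ W ⊆ nds f 1 m '' U
  | 0 => ⟨U, hU, hUne, by simp [nds]⟩
  | m + 1 => by
    obtain ⟨W, hW, hWne, hWsub⟩ := feeble_chain f hfo U hU hUne m
    refine ⟨interior (f (1 + m) '' W), isOpen_interior,
      hfo (1 + m) (by omega) W hW hWne, ?_⟩
    refine subset_trans interior_subset ?_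
    intro x hx
    obtain ⟨w, hw, rfl⟩ := hx
    obtain ⟨u, hu, rfl⟩ := hWsub hw
    exact ⟨u, hu, rfl⟩

theorem totallyTransitive_iff_limit_totallyTransitive {X : Type*} [MetricSpace X]
    [CompactSpace X]
    (f : ℕ → X → X) (F : X → X)
    (hcont : ∀ n : ℕ, 1 ≤ n → Continuous (f n))
    (hfo : FeebleOpen f)
    (hsurj : ∀ n : ℕ, 1 ≤ n → Function.Surjective (f n))
    (hF : Continuous F)
    (hunif : TendstoUniformly (fun n x => f n x) F Filter.atTop)
    (hcoll : CollectivelyConverges f F) :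
    NDSTotallyTransitive f ↔ MapTotallyTransitive F := by
  constructor
  · -- NDS totally transitive → F totally transitive
    intro hf k hk U V hU hUne hV hVne
    obtain ⟨v, hv⟩ := hVne
    obtain ⟨ε, hε, hball⟩ := Metric.isOpen_iff.mp hV v hv
    obtain ⟨r₀, hr₀⟩ := hcoll (ε / 2) (by linarith)
    set M := max r₀ 1 with hM
    set m := k * M with hm
    have hMr : M ≤ k * M := Nat.le_mul_of_pos_left M hk
    have hmr : r₀ ≤ m := le_trans (le_max_left _ _) hMr
    have hm1 : 1 ≤ m := le_trans (le_max_right _ _) hMr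
    have hgc : Continuous (nds f 1 m) := nds_cont f hcont 1 le_rfl m
    have hgs : Function.Surjective (nds f 1 m) := nds_surj f hsurj 1 le_rfl m
    have hSopen : IsOpen ((nds f 1 m) ⁻¹' U) := hU.preimage hgc
    have hSne : ((nds f 1 m) ⁻¹' U).Nonempty := by
      obtain ⟨x, hx⟩ := hUne
      obtain ⟨y, hy⟩ := hgs x
      exact ⟨y, show nds f 1 m y ∈ U from hy ▸ hx⟩
    obtain ⟨n'', hn'', hhit⟩ := hf (m + k) (by omega) _ (Metric.ball v (ε / 2))
      hSopen hSne Metric.isOpen_ball (Metric.nonempty_ball.mpr (by linarith))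
    obtain ⟨y, ⟨u, hu, rfl⟩, hyb⟩ := hhit
    have hMleft : M + 1 ≤ n'' * (M + 1) := Nat.le_mul_of_pos_left _ hn''
    obtain ⟨n, hn⟩ : ∃ n, n'' * (M + 1) = M + n := ⟨n'' * (M + 1) - M, by omega⟩
    have hnpos : 0 < n := by omega
    have hexp : n'' * (m + k) = m + n * k := by
      have h1 : n'' * (m + k) = k * (n'' * (M + 1)) := by rw [hm]; ring
      rw [h1, hn, hm]; ring
    have hj1 : 1 ≤ n * k := Nat.mul_pos hnpos hk
    have hcomp : nds f 1 (n'' * (m + k)) u = nds f (1 + m) (n * k) (nds f 1 m u) := by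
      rw [hexp, nds_add]; rfl
    have hdist := hr₀ (1 + m) (by omega) (n * k) hj1 (nds f 1 m u)
    refine ⟨n, hnpos, F^[n * k] (nds f 1 m u), ⟨nds f 1 m u, hu, rfl⟩, hball ?_⟩
    have hd2 : dist (nds f 1 (n'' * (m + k)) u) v < ε / 2 := hyb
    rw [hcomp] at hd2
    have htri := dist_triangle (F^[n * k] (nds f 1 m u))
      (nds f (1 + m) (n * k) (nds f 1 m u)) v
    have hsym : dist (F^[n * k] (nds f 1 m u)) (nds f (1 + m) (n * k) (nds f 1 m u))
        = dist (nds f (1 + m) (n * k) (nds f 1 m u)) (F^[n * k] (nds f 1 m u)) :=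
      dist_comm _ _
    simp only [Metric.mem_ball]
    linarith
  · -- F totally transitive → NDS totally transitive
    intro hF' k hk U V hU hUne hV hVne
    obtain ⟨v, hv⟩ := hVne
    obtain ⟨ε, hε, hball⟩ := Metric.isOpen_iff.mp hV v hv
    obtain ⟨r₀, hr₀⟩ := hcoll (ε / 2) (by linarith)
    set M := max r₀ 1 with hM
    set m := k * M with hm
    have hMr : M ≤ k * M := Nat.le_mul_of_pos_left M hk
    have hmr : r₀ ≤ m := le_trans (le_max_left _ _) hMr
    have hm1 : 1 ≤ m := le_trans (le_max_right _ _) hMr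
    obtain ⟨W, hWopen, hWne, hWsub⟩ := feeble_chain f hfo U hU hUne m
    obtain ⟨n'', hn'', hhit⟩ := hF' (m + k) (by omega) W (Metric.ball v (ε / 2))
      hWopen hWne Metric.isOpen_ball (Metric.nonempty_ball.mpr (by linarith))
    obtain ⟨y, ⟨x, hxW, rfl⟩, hyb⟩ := hhit
    obtain ⟨u, hu, rfl⟩ := hWsub hxW
    have hMleft : M + 1 ≤ n'' * (M + 1) := Nat.le_mul_of_pos_left _ hn''
    refine ⟨M + n'' * (M + 1), by omega, nds f 1 ((M + n'' * (M + 1)) * k) u,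
      ⟨u, hu, rfl⟩, ?_⟩
    have hj1 : 1 ≤ n'' * (m + k) := Nat.mul_pos hn'' (by omega)
    have hexp : (M + n'' * (M + 1)) * k = m + n'' * (m + k) := by rw [hm]; ring
    have hcomp : nds f 1 ((M + n'' * (M + 1)) * k) u
        = nds f (1 + m) (n'' * (m + k)) (nds f 1 m u) := by
      rw [hexp, nds_add]; rfl
    have hdist := hr₀ (1 + m) (by omega) (n'' * (m + k)) hj1 (nds f 1 m u)
    have hd2 : dist (F^[n'' * (m + k)] (nds f 1 m u)) v < ε / 2 := hyb
    refine hball ?_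
    rw [hcomp]
    have htri := dist_triangle (nds f (1 + m) (n'' * (m + k)) (nds f 1 m u))
      (F^[n'' * (m + k)] (nds f 1 m u)) v
    simp only [Metric.mem_ball]
    linarith
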